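/- Let H and K be complex Hilbert spaces, let X ⊆ B(K, H) be a set of operators, let e ∈ X with e ∘ e* ∘ e = e, and let p ∈ B(H), q ∈ B(K) be orthogonal projections satisfying: p = p ∘ e ∘ e* = e ∘ e* ∘ p; q = q ∘ e* ∘ e = e* ∘ e ∘ q; p ∘ x ∘ y* = x ∘ y* ∘ p and q ∘ x* ∘ y = x* ∘ y ∘ q for all x, y ∈ X; p ∘ x ∈ X for all x ∈ X; and (1_H − p) ∘ x ∘ (1_K − e* ∘ e) = 0 for all x ∈ X. Set q₁ := e* ∘ (1_H − p) ∘ e ∘ (1_K − q) and q₂ := 1_K − q − q₁. Then every x ∈ X satisfies ‖x‖ = max(‖x ∘ q₁‖, ‖x ∘ q‖, ‖x ∘ q₂‖); that is, X decomposes as the ℓ∞-direct sum X∘q₁ ⊕∞ X∘q ⊕∞ X∘q₂. -/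

import Mathlib

open ContinuousLinearMap in
private theorem tro_contr {E : Type*} [NormedAddCommGroup E] [InnerProductSpace ℂ E]
    [CompleteSpace E] (P : E →L[ℂ] E) (h1 : adjoint P = P) (h2 : P ∘L P = P) (v : E) :
    ‖P v‖ ≤ ‖v‖ := by
  have hPPv : P (P v) = P v := by have := DFunLike.congr_fun h2 v; simpa using this
  have key : (inner ℂ (P v) (P v) : ℂ) = inner ℂ (P v) v := by
    have h3 := ContinuousLinearMap.adjoint_inner_left P v (P v)
    rw [h1, hPPv] at h3
    exact h3.symm
  have h4 : ‖P v‖^2 = RCLike.re (inner ℂ (P v) v : ℂ) := by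
    rw [← key, inner_self_eq_norm_sq]
  have h5 : ‖P v‖^2 ≤ ‖P v‖ * ‖v‖ := by
    rw [h4]; exact le_trans (RCLike.re_le_norm _) (norm_inner_le_norm _ _)
  rcases (norm_nonneg (P v)).eq_or_lt with h0 | h0
  · rw [← h0]; exact norm_nonneg v
  · rw [pow_two] at h5; exact le_of_mul_le_mul_left h5 h0

private theorem tro_pyth3 {E : Type*} [NormedAddCommGroup E] [InnerProductSpace ℂ E]
    (u₁ u₂ u₃ : E) (h12 : inner ℂ u₁ u₂ = (0:ℂ)) (h13 : inner ℂ u₁ u₃ = (0:ℂ))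
    (h23 : inner ℂ u₂ u₃ = (0:ℂ)) :
    ‖u₁ + u₂ + u₃‖^2 = ‖u₁‖^2 + ‖u₂‖^2 + ‖u₃‖^2 := by
  rw [add_assoc, norm_add_sq (𝕜 := ℂ) u₁ (u₂ + u₃), inner_add_right, h12, h13,
      norm_add_sq (𝕜 := ℂ) u₂ u₃, h23]
  simp; ring

set_option maxHeartbeats 4000000 in
open ContinuousLinearMap in
/-- The norm-decomposition step in the ideal decomposition of a TRO with predual:
with `e ∈ X` a partial isometry, `p`, `q` the associated projections,
`q₁ := e* (1 - p) e (1 - q)` and `q₂ := 1 - q - q₁`, every `x ∈ X` satisfies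
`‖x‖ = max (‖x q₁‖, ‖x q‖, ‖x q₂‖)`; that is, `X = Xq₁ ⊕∞ Xq ⊕∞ Xq₂`. -/
theorem stmt_15 {H K : Type*} [NormedAddCommGroup H] [InnerProductSpace ℂ H] [CompleteSpace H]
    [NormedAddCommGroup K] [InnerProductSpace ℂ K] [CompleteSpace K]
    (X : Set (K →L[ℂ] H)) (e : K →L[ℂ] H) (heX : e ∈ X)
    (hpartial : e ∘L ((adjoint e) ∘L e) = e)
    (p : H →L[ℂ] H) (q : K →L[ℂ] K)
    (hp : adjoint p = p ∧ p ∘L p = p)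
    (hq : adjoint q = q ∧ q ∘L q = q)
    (hpe : p = p ∘L (e ∘L (adjoint e)) ∧ p = (e ∘L (adjoint e)) ∘L p)
    (hqe : q = q ∘L ((adjoint e) ∘L e) ∧ q = ((adjoint e) ∘L e) ∘L q)
    (hpcomm : ∀ x ∈ X, ∀ y ∈ X,
      p ∘L (x ∘L (adjoint y)) = (x ∘L (adjoint y)) ∘L p)
    (hqcomm : ∀ x ∈ X, ∀ y ∈ X,
      q ∘L ((adjoint x) ∘L y) = ((adjoint x) ∘L y) ∘L q)
    (hpX : ∀ x ∈ X, p ∘L x ∈ X)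
    (hnull : ∀ x ∈ X, (1 - p) ∘L (x ∘L (1 - ((adjoint e) ∘L e))) = 0)
    (q₁ q₂ : K →L[ℂ] K)
    (hq₁ : q₁ = (adjoint e) ∘L ((1 - p) ∘L (e ∘L (1 - q))))
    (hq₂ : q₂ = 1 - q - q₁) :
    ∀ x ∈ X, ‖x‖ = max (max ‖x ∘L q₁‖ ‖x ∘L q‖) ‖x ∘L q₂‖ := by
  -- pointwise basic identities
  have he1 : ∀ v : K, e (adjoint e (e v)) = e v := by
    intro v; have h := DFunLike.congr_fun hpartial v; simpa using h
  have hfe' : ∀ w : H, adjoint e (e (adjoint e w)) = adjoint e w := by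
    intro w
    have h := congrArg adjoint hpartial
    rw [adjoint_comp, adjoint_comp, adjoint_adjoint] at h
    have h2 := DFunLike.congr_fun h w; simpa using h2
  have hp2' : ∀ w : H, p (p w) = p w := by
    intro w; have h := DFunLike.congr_fun hp.2 w; simpa using h
  have hq2' : ∀ v : K, q (q v) = q v := by
    intro v; have h := DFunLike.congr_fun hq.2 v; simpa using h
  have hpe1' : ∀ w : H, p (e (adjoint e w)) = p w := by
    intro w; have h := DFunLike.congr_fun hpe.1 w; simp only [comp_apply] at h; exact h.symm
  have hpe2' : ∀ w : H, e (adjoint e (p w)) = p w := by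
    intro w; have h := DFunLike.congr_fun hpe.2 w; simp only [comp_apply] at h; exact h.symm
  have hqe1' : ∀ v : K, q (adjoint e (e v)) = q v := by
    intro v; have h := DFunLike.congr_fun hqe.1 v; simp only [comp_apply] at h; exact h.symm
  have hqe2' : ∀ v : K, adjoint e (e (q v)) = q v := by
    intro v; have h := DFunLike.congr_fun hqe.2 v; simp only [comp_apply] at h; exact h.symm
  have hqr' : ∀ v : K, q (adjoint e (p (e v))) = adjoint e (p (e (q v))) := by
    intro v
    have h := DFunLike.congr_fun (hqcomm e heX (p ∘L e) (hpX e heX)) v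
    simpa using h
  -- formula for q₁ applied to a vector
  have hq₁v : ∀ v : K, q₁ v = adjoint e (e v) - q v - adjoint e (p (e v))
      + adjoint e (p (e (q v))) := by
    intro v
    rw [hq₁]
    simp only [comp_apply, sub_apply, ContinuousLinearMap.one_apply, map_sub, hqe2']
    abel
  have z1 : ∀ v : K, q₁ (q v) = 0 := by
    intro v
    rw [hq₁v (q v)]
    simp only [hq2', hqe2']
    abel
  have z2 : ∀ v : K, q (q₁ v) = 0 := by
    intro v
    rw [hq₁v v]
    simp only [map_sub, map_add, hqe1', hq2', hqr']
    abel
  have hfq₁ : ∀ v : K, adjoint e (e (q₁ v)) = q₁ v := by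
    intro v
    conv_lhs => rw [hq₁v v]
    conv_rhs => rw [hq₁v v]
    simp only [map_sub, map_add, hfe', hqe2']
  have hpeq₁ : ∀ v : K, p (e (q₁ v)) = 0 := by
    intro v
    rw [hq₁v v]
    simp only [map_sub, map_add, hpe1', hp2']
    abel
  have z3 : ∀ v : K, q₁ (q₁ v) = q₁ v := by
    intro v
    rw [hq₁v (q₁ v)]
    simp only [z2, hfq₁, hpeq₁, map_zero, sub_zero, add_zero]
  -- operator-level lemmas
  have adj1K : adjoint (1 : K →L[ℂ] K) = 1 := by
    rw [← star_eq_adjoint, star_one]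
  have hfadj : adjoint ((adjoint e) ∘L e) = (adjoint e) ∘L e := by
    rw [adjoint_comp, adjoint_adjoint]
  have hgadj : adjoint ((adjoint e) ∘L e - (adjoint e) ∘L (p ∘L e))
      = (adjoint e) ∘L e - (adjoint e) ∘L (p ∘L e) := by
    rw [map_sub, hfadj, adjoint_comp, adjoint_comp, hp.1, adjoint_adjoint, comp_assoc]
  have O4 : q₁ = ((adjoint e) ∘L e - (adjoint e) ∘L (p ∘L e)) ∘L (1 - q) := by
    ext v
    rw [hq₁v v]
    simp only [comp_apply, sub_apply, ContinuousLinearMap.one_apply, map_sub, hqe2']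
    abel
  have O6 : ((adjoint e) ∘L e - (adjoint e) ∘L (p ∘L e)) ∘L q
      = q ∘L ((adjoint e) ∘L e - (adjoint e) ∘L (p ∘L e)) := by
    ext v
    simp only [comp_apply, sub_apply, map_sub, hqe2', hqe1', hqr']
  have hqfop : q ∘L ((adjoint e) ∘L e) = q := hqe.1.symm
  have hfqop : ((adjoint e) ∘L e) ∘L q = q := hqe.2.symm
  have hqrop : q ∘L ((adjoint e) ∘L (p ∘L e)) = ((adjoint e) ∘L (p ∘L e)) ∘L q :=
    hqcomm e heX (p ∘L e) (hpX e heX)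
  have hq₁adj : adjoint q₁ = q₁ := by
    rw [O4, adjoint_comp, map_sub, adj1K, hq.1, hgadj]
    simp only [sub_comp, comp_sub, one_def, id_comp, comp_id, hqfop, hfqop, hqrop]
    abel
  have hq₂adj : adjoint q₂ = q₂ := by
    rw [hq₂, map_sub, map_sub, adj1K, hq.1, hq₁adj]
  have Z1 : q₁ ∘L q = 0 := by ext v; simp only [comp_apply, zero_apply, z1]
  have Z2 : q ∘L q₁ = 0 := by ext v; simp only [comp_apply, zero_apply, z2]
  have Z3 : q₁ ∘L q₁ = q₁ := by ext v; simp only [comp_apply, z3]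
  have Z4 : q ∘L q₂ = 0 := by
    rw [hq₂]
    simp only [comp_sub, one_def, comp_id, hq.2, Z2]
    abel
  have Z5 : q₁ ∘L q₂ = 0 := by
    rw [hq₂]
    simp only [comp_sub, one_def, comp_id, Z1, Z3]
    abel
  have Z4' : q₂ ∘L q = 0 := by
    rw [hq₂]
    simp only [sub_comp, one_def, id_comp, hq.2, Z1]
    abel
  have Z5' : q₂ ∘L q₁ = 0 := by
    rw [hq₂]
    simp only [sub_comp, one_def, id_comp, Z2, Z3]
    abel
  have hq₂idem : q₂ ∘L q₂ = q₂ := by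
    nth_rewrite 1 [hq₂]
    simp only [sub_comp, one_def, id_comp]
    rw [Z4, Z5]
    abel
  -- x-dependent part
  intro x hx
  have hpex' : ∀ w : H, p (e (adjoint x w)) = e (adjoint x (p w)) := by
    intro w; have h := DFunLike.congr_fun (hpcomm e heX x hx) w; simpa using h
  have haadj : adjoint ((adjoint x) ∘L x) = (adjoint x) ∘L x := by
    rw [adjoint_comp, adjoint_adjoint]
  have O5' : ((adjoint x) ∘L x) ∘L q = q ∘L ((adjoint x) ∘L x) := (hqcomm x hx x hx).symm
  have hYnull : (x - p ∘L x) = (x - p ∘L x) ∘L ((adjoint e) ∘L e) := by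
    have key : (x - p ∘L x) - (x - p ∘L x) ∘L ((adjoint e) ∘L e)
        = (1 - p) ∘L (x ∘L (1 - ((adjoint e) ∘L e))) := by
      simp only [comp_sub, sub_comp, one_def, id_comp, comp_id, comp_assoc]
    rw [hnull x hx] at key
    exact sub_eq_zero.mp key
  have step2 : adjoint (x - p ∘L x) = ((adjoint e) ∘L e) ∘L adjoint (x - p ∘L x) := by
    conv_lhs => rw [hYnull]
    rw [adjoint_comp, hfadj]
  have hpY : p ∘L (x - p ∘L x) = 0 := by
    rw [comp_sub, ← comp_assoc, hp.2, sub_self]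
  have step1 : (adjoint x) ∘L (x - p ∘L x) = adjoint (x - p ∘L x) ∘L (x - p ∘L x) := by
    rw [map_sub, adjoint_comp, hp.1, sub_comp, comp_assoc, hpY, comp_zero, sub_zero]
  have OY : ((adjoint e) ∘L e) ∘L ((adjoint x) ∘L (x - p ∘L x))
      = (adjoint x) ∘L (x - p ∘L x) := by
    rw [step1, ← comp_assoc, ← step2]
  have O2 : ((adjoint e) ∘L e - (adjoint e) ∘L (p ∘L e)) ∘L ((adjoint x) ∘L x)
      = (adjoint x) ∘L x - (adjoint x) ∘L (p ∘L x) := by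
    ext v
    have oy := DFunLike.congr_fun OY v
    simp only [comp_apply, sub_apply, map_sub] at oy ⊢
    rw [hpex' (x v)]
    exact oy
  have O3 : ((adjoint x) ∘L x) ∘L ((adjoint e) ∘L e - (adjoint e) ∘L (p ∘L e))
      = (adjoint x) ∘L x - (adjoint x) ∘L (p ∘L x) := by
    have h := congrArg adjoint O2
    simp only [map_sub, adjoint_comp, adjoint_adjoint, hp.1, comp_assoc] at h
    exact h
  have O7 : ((adjoint x) ∘L x) ∘L q₁ = q₁ ∘L ((adjoint x) ∘L x) := by
    rw [O4, ← comp_assoc ((adjoint x) ∘L x)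
        ((adjoint e) ∘L e - (adjoint e) ∘L (p ∘L e)) (1 - q), O3, ← O2,
      comp_assoc ((adjoint e) ∘L e - (adjoint e) ∘L (p ∘L e)) ((adjoint x) ∘L x) (1 - q),
      comp_assoc ((adjoint e) ∘L e - (adjoint e) ∘L (p ∘L e)) (1 - q) ((adjoint x) ∘L x)]
    congr 1
    simp only [comp_sub, sub_comp, one_def, comp_id, id_comp, O5']
  have O8 : ((adjoint x) ∘L x) ∘L q₂ = q₂ ∘L ((adjoint x) ∘L x) := by
    rw [hq₂]
    simp only [comp_sub, sub_comp, one_def, comp_id, id_comp, O5', O7]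
  -- cross-orthogonality
  have cross : ∀ P R : K →L[ℂ] K, adjoint P = P → P ∘L R = 0 →
      ((adjoint x) ∘L x) ∘L P = P ∘L ((adjoint x) ∘L x) →
      ∀ v : K, (inner ℂ (x (P v)) (x (R v)) : ℂ) = 0 ∧ (inner ℂ (P v) (R v) : ℂ) = 0 := by
    intro P R hPadj hPR hPa v
    have hPR' : ∀ w : K, P (R w) = 0 := by
      intro w; have h := DFunLike.congr_fun hPR w; simpa using h
    constructor
    · have h1 := ContinuousLinearMap.adjoint_inner_left x (R v) (x (P v))
      have h2 : adjoint x (x (P v)) = P ((adjoint x) (x v)) := by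
        have h := DFunLike.congr_fun hPa v; simpa using h
      rw [← h1, h2, ← hPadj]
      rw [ContinuousLinearMap.adjoint_inner_left P (R v) ((adjoint x) (x v))]
      rw [hPR' v, inner_zero_right]
    · rw [← hPadj, ContinuousLinearMap.adjoint_inner_left P (R v) v, hPR' v,
        inner_zero_right]
  have hsum : ∀ v : K, q₁ v + q v + q₂ v = v := by
    intro v
    have h := DFunLike.congr_fun hq₂ v
    simp only [sub_apply, one_apply] at h
    rw [h]; abel
  set M := max (max ‖x ∘L q₁‖ ‖x ∘L q‖) ‖x ∘L q₂‖ with hM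
  have hM0 : (0:ℝ) ≤ M :=
    le_trans (norm_nonneg (x ∘L q)) (le_trans (le_max_right _ _) (le_max_left _ _))
  have hub : ‖x‖ ≤ M := by
    refine opNorm_le_bound x hM0 (fun v => ?_)
    have hxv : x v = x (q₁ v) + x (q v) + x (q₂ v) := by
      conv_lhs => rw [← hsum v]
      rw [map_add, map_add]
    have c12 := cross q₁ q hq₁adj Z1 O7 v
    have c13 := cross q₁ q₂ hq₁adj Z5 O7 v
    have c23 := cross q q₂ hq.1 Z4 O5' v
    have e1 : ‖x v‖^2 = ‖x (q₁ v)‖^2 + ‖x (q v)‖^2 + ‖x (q₂ v)‖^2 := by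
      rw [hxv]; exact tro_pyth3 _ _ _ c12.1 c13.1 c23.1
    have e2 : ‖v‖^2 = ‖q₁ v‖^2 + ‖q v‖^2 + ‖q₂ v‖^2 := by
      conv_lhs => rw [← hsum v]
      exact tro_pyth3 _ _ _ c12.2 c13.2 c23.2
    have z4'' : q₂ (q₂ v) = q₂ v := by
      have h := DFunLike.congr_fun hq₂idem v; simpa using h
    have b1 : ‖x (q₁ v)‖ ≤ M * ‖q₁ v‖ := by
      have h1 : x (q₁ v) = (x ∘L q₁) (q₁ v) := by rw [comp_apply, z3 v]
      rw [h1]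
      exact le_trans (le_opNorm _ _) (mul_le_mul_of_nonneg_right
        (le_trans (le_max_left _ _) (le_max_left _ _)) (norm_nonneg _))
    have b2 : ‖x (q v)‖ ≤ M * ‖q v‖ := by
      have h1 : x (q v) = (x ∘L q) (q v) := by rw [comp_apply, hq2' v]
      rw [h1]
      exact le_trans (le_opNorm _ _) (mul_le_mul_of_nonneg_right
        (le_trans (le_max_right _ _) (le_max_left _ _)) (norm_nonneg _))
    have b3 : ‖x (q₂ v)‖ ≤ M * ‖q₂ v‖ := by
      have h1 : x (q₂ v) = (x ∘L q₂) (q₂ v) := by rw [comp_apply, z4'']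
      rw [h1]
      exact le_trans (le_opNorm _ _) (mul_le_mul_of_nonneg_right
        (le_max_right _ _) (norm_nonneg _))
    have sq1 : ‖x (q₁ v)‖^2 ≤ M^2 * ‖q₁ v‖^2 := by
      have h := pow_le_pow_left₀ (norm_nonneg _) b1 2
      rwa [mul_pow] at h
    have sq2 : ‖x (q v)‖^2 ≤ M^2 * ‖q v‖^2 := by
      have h := pow_le_pow_left₀ (norm_nonneg _) b2 2
      rwa [mul_pow] at h
    have sq3 : ‖x (q₂ v)‖^2 ≤ M^2 * ‖q₂ v‖^2 := by
      have h := pow_le_pow_left₀ (norm_nonneg _) b3 2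
      rwa [mul_pow] at h
    have final : ‖x v‖^2 ≤ (M * ‖v‖)^2 := by
      rw [e1, mul_pow, e2, mul_add, mul_add]
      linarith
    exact le_of_pow_le_pow_left₀ two_ne_zero (by positivity) final
  have lb1 : ‖x ∘L q₁‖ ≤ ‖x‖ := by
    refine opNorm_le_bound _ (norm_nonneg x) (fun v => ?_)
    rw [comp_apply]
    exact le_trans (le_opNorm x _)
      (mul_le_mul_of_nonneg_left (tro_contr q₁ hq₁adj Z3 v) (norm_nonneg x))
  have lb2 : ‖x ∘L q‖ ≤ ‖x‖ := by
    refine opNorm_le_bound _ (norm_nonneg x) (fun v => ?_)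
    rw [comp_apply]
    exact le_trans (le_opNorm x _)
      (mul_le_mul_of_nonneg_left (tro_contr q hq.1 hq.2 v) (norm_nonneg x))
  have lb3 : ‖x ∘L q₂‖ ≤ ‖x‖ := by
    refine opNorm_le_bound _ (norm_nonneg x) (fun v => ?_)
    rw [comp_apply]
    exact le_trans (le_opNorm x _)
      (mul_le_mul_of_nonneg_left (tro_contr q₂ hq₂adj hq₂idem v) (norm_nonneg x))
  exact le_antisymm hub (max_le (max_le lb1 lb2) lb3)
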